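/- The state |ψ⟩ = (1/(2√2))(|00000⟩+|01111⟩+|10011⟩+|11100⟩+|20101⟩+|21010⟩+|30110⟩+|31001⟩) in C^4⊗C^2⊗C^2⊗C^2⊗C^2 is 2-uniform: for every pair of the five parties, the reduced density matrix is maximally mixed. -/

import Mathlib

open Finset

/-- Entry `(a|_S, b|_S)` of the reduced density matrix of the pure state with
computational-basis coefficients `ψ`, obtained by tracing out the parties
outside `S`. -/
noncomputable def reducedEntry {ι : Type} [Fintype ι] [DecidableEq ι]
    (d : ι → ℕ) (ψ : (∀ i, Fin (d i)) → ℂ) (S : Finset ι)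
    (a b : ∀ i, Fin (d i)) : ℂ :=
  ∑ c : ∀ i : {i // i ∉ S}, Fin (d i.1),
    ψ (fun i => if h : i ∈ S then a i else c ⟨i, h⟩) *
      (starRingEnd ℂ) (ψ (fun i => if h : i ∈ S then b i else c ⟨i, h⟩))

/-- `ψ` is `k`-uniform: every reduction to `k` parties is maximally mixed. -/
def IsKUniform {ι : Type} [Fintype ι] [DecidableEq ι]
    (d : ι → ℕ) (k : ℕ) (ψ : (∀ i, Fin (d i)) → ℂ) : Prop :=
  ∀ S : Finset ι, S.card = k → ∀ a b : ∀ i, Fin (d i),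
    reducedEntry d ψ S a b =
      if ∀ i ∈ S, a i = b i then 1 / (∏ i ∈ S, (d i : ℂ)) else 0

/-- Local dimensions of `C⁴ ⊗ C² ⊗ C² ⊗ C² ⊗ C²`. -/
def dims5 : Fin 5 → ℕ := fun i => if i = 0 then 4 else 2

/-- The eight rows supporting the state. -/
def rows42222 : List (ℕ × ℕ × ℕ × ℕ × ℕ) :=
  [(0,0,0,0,0), (0,1,1,1,1), (1,0,0,1,1), (1,1,1,0,0),
   (2,0,1,0,1), (2,1,0,1,0), (3,0,1,1,0), (3,1,0,0,1)]

/-- The state `|ψ⟩ = (1/(2√2))(|00000⟩ + |01111⟩ + |10011⟩ + |11100⟩ + |20101⟩ +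
|21010⟩ + |30110⟩ + |31001⟩)`. -/
noncomputable def psi42222 : (∀ i, Fin (dims5 i)) → ℂ :=
  fun x =>
    if ((x 0 : ℕ), (x 1 : ℕ), (x 2 : ℕ), (x 3 : ℕ), (x 4 : ℕ)) ∈ rows42222
    then ((1 / (2 * Real.sqrt 2) : ℝ) : ℂ) else 0

/- auxiliary -/

def tup5 (x : ∀ i, Fin (dims5 i)) : ℕ × ℕ × ℕ × ℕ × ℕ :=
  ((x 0 : ℕ), (x 1 : ℕ), (x 2 : ℕ), (x 3 : ℕ), (x 4 : ℕ))

def cnt' (S : Finset (Fin 5)) (a' b' : ∀ i : {i // i ∈ S}, Fin (dims5 i.1)) : ℕ :=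
  (Finset.univ.filter (fun c : ∀ i : {i // i ∉ S}, Fin (dims5 i.1) =>
    tup5 (fun i => if h : i ∈ S then a' ⟨i, h⟩ else c ⟨i, h⟩) ∈ rows42222 ∧
    tup5 (fun i => if h : i ∈ S then b' ⟨i, h⟩ else c ⟨i, h⟩) ∈ rows42222)).card

set_option maxRecDepth 100000 in
theorem key42222 : ∀ S : Finset (Fin 5), S.card = 2 →
    ∀ a' b' : ∀ i : {i // i ∈ S}, Fin (dims5 i.1),
    cnt' S a' b' * (∏ i ∈ S, dims5 i) = if a' = b' then 8 else 0 := by decide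

theorem cntfull : (Finset.univ.filter
    (fun x : ∀ i, Fin (dims5 i) => tup5 x ∈ rows42222)).card = 8 := by decide

lemma c_sq : ((1 / (2 * Real.sqrt 2) : ℝ)) * ((1 / (2 * Real.sqrt 2) : ℝ)) = 1/8 := by
  have hs : Real.sqrt 2 * Real.sqrt 2 = 2 := Real.mul_self_sqrt (by norm_num)
  field_simp
  nlinarith [hs]


/-- The state `psi42222` is a normalized `2`-uniform state in
`C⁴ ⊗ C² ⊗ C² ⊗ C² ⊗ C²`. -/
theorem psi42222_two_uniform :
    (∑ x, ‖psi42222 x‖ ^ 2 = 1) ∧ IsKUniform dims5 2 psi42222 := by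
  have c_nonneg : (0:ℝ) ≤ 1 / (2 * Real.sqrt 2) := by positivity
  constructor
  · have hnorm : ∀ x, ‖psi42222 x‖ ^ 2 = if tup5 x ∈ rows42222 then (1/8 : ℝ) else 0 := by
      intro x
      show ‖(if tup5 x ∈ rows42222 then ((1 / (2 * Real.sqrt 2) : ℝ) : ℂ) else 0)‖ ^ 2 = _
      split_ifs with h
      · rw [Complex.norm_real, Real.norm_eq_abs, abs_of_nonneg c_nonneg, sq, c_sq]
      · simp
    calc ∑ x, ‖psi42222 x‖ ^ 2
        = ∑ x, if tup5 x ∈ rows42222 then (1/8 : ℝ) else 0 := by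
          exact Finset.sum_congr rfl (fun x _ => hnorm x)
      _ = ∑ x ∈ Finset.univ.filter (fun x : ∀ i, Fin (dims5 i) => tup5 x ∈ rows42222),
            (1/8 : ℝ) := (Finset.sum_filter _ _).symm
      _ = 1 := by rw [Finset.sum_const, cntfull]; norm_num
  · intro S hS a b
    have hterm : ∀ (x y : ∀ i, Fin (dims5 i)),
        psi42222 x * (starRingEnd ℂ) (psi42222 y) =
          if tup5 x ∈ rows42222 ∧ tup5 y ∈ rows42222 then ((1/8 : ℝ) : ℂ) else 0 := by
      intro x y
      show (if tup5 x ∈ rows42222 then ((1 / (2 * Real.sqrt 2) : ℝ) : ℂ) else 0) *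
          (starRingEnd ℂ) (if tup5 y ∈ rows42222 then ((1 / (2 * Real.sqrt 2) : ℝ) : ℂ) else 0) = _
      rw [apply_ite (starRingEnd ℂ), map_zero, Complex.conj_ofReal]
      rcases Decidable.em (tup5 x ∈ rows42222) with h1 | h1 <;>
        rcases Decidable.em (tup5 y ∈ rows42222) with h2 | h2
      · rw [if_pos h1, if_pos h2, if_pos ⟨h1, h2⟩, ← Complex.ofReal_mul, c_sq]
      · rw [if_pos h1, if_neg h2, if_neg (by tauto), mul_zero]
      · rw [if_neg h1, if_pos h2, if_neg (by tauto), zero_mul]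
      · rw [if_neg h1, if_neg h2, if_neg (by tauto), zero_mul]
    have hred : reducedEntry dims5 psi42222 S a b =
        (cnt' S (fun i : {i // i ∈ S} => a i.1) (fun i : {i // i ∈ S} => b i.1) : ℂ) * ((1/8 : ℝ) : ℂ) := by
      unfold reducedEntry
      calc (∑ c : ∀ i : {i // i ∉ S}, Fin (dims5 i.1),
            psi42222 (fun i => if h : i ∈ S then a i else c ⟨i, h⟩) *
              (starRingEnd ℂ) (psi42222 (fun i => if h : i ∈ S then b i else c ⟨i, h⟩)))
          = ∑ c : ∀ i : {i // i ∉ S}, Fin (dims5 i.1),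
              if tup5 (fun i => if h : i ∈ S then a i else c ⟨i, h⟩) ∈ rows42222 ∧
                 tup5 (fun i => if h : i ∈ S then b i else c ⟨i, h⟩) ∈ rows42222
              then ((1/8 : ℝ) : ℂ) else 0 :=
            Finset.sum_congr rfl (fun c _ => hterm _ _)
        _ = (cnt' S (fun i : {i // i ∈ S} => a i.1) (fun i : {i // i ∈ S} => b i.1) : ℂ) * ((1/8 : ℝ) : ℂ) := by
            rw [← Finset.sum_filter, Finset.sum_const, cnt', nsmul_eq_mul]
    have hkey := key42222 S hS (fun i : {i // i ∈ S} => a i.1) (fun i : {i // i ∈ S} => b i.1)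
    have hprodpos : (0:ℕ) < ∏ i ∈ S, dims5 i := by
      apply Finset.prod_pos; intro i _; unfold dims5; split <;> norm_num
    have hprodC : (∏ i ∈ S, (dims5 i : ℂ)) = ((∏ i ∈ S, dims5 i : ℕ) : ℂ) := by
      push_cast; ring
    have hprodne : (∏ i ∈ S, (dims5 i : ℂ)) ≠ 0 := by
      rw [hprodC]; exact_mod_cast hprodpos.ne'
    have hiff : (∀ i ∈ S, a i = b i) ↔
        (fun i : {i // i ∈ S} => a i.1) = (fun i : {i // i ∈ S} => b i.1) := by
      constructor
      · intro h; funext i; exact h i.1 i.2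
      · intro h i hi; exact congrFun h ⟨i, hi⟩
    by_cases hab : ∀ i ∈ S, a i = b i
    · rw [if_pos hab]
      rw [if_pos (hiff.mp hab)] at hkey
      have h8 : ((cnt' S (fun i : {i // i ∈ S} => a i.1) (fun i : {i // i ∈ S} => b i.1) : ℕ) : ℂ) *
          (∏ i ∈ S, (dims5 i : ℂ)) = 8 := by
        rw [hprodC]; exact_mod_cast congrArg (Nat.cast : ℕ → ℂ) hkey
      rw [hred]
      have : ((cnt' S (fun i : {i // i ∈ S} => a i.1) (fun i : {i // i ∈ S} => b i.1) : ℕ) : ℂ) =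
          8 / (∏ i ∈ S, (dims5 i : ℂ)) := eq_div_of_mul_eq hprodne h8
      rw [this]
      push_cast
      field_simp
    · rw [if_neg hab]
      rw [if_neg (fun h => hab (hiff.mpr h))] at hkey
      have : cnt' S (fun i : {i // i ∈ S} => a i.1) (fun i : {i // i ∈ S} => b i.1) = 0 := by
        rcases Nat.mul_eq_zero.mp hkey with h | h
        · exact h
        · exact absurd h hprodpos.ne'
      rw [hred, this]; simp
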